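/- Let X be an infinite ultrahomogeneous linear order and K a complete linear order with least element ⊥ and greatest element ⊤, endowed with the order topology, containing X and such that every k ∈ K satisfies k = sup{x ∈ X : x ≤ k} and k = inf{x ∈ X : k ≤ x}; for g ∈ Aut(X) let ĝ be the extension of g to K given by ĝ(k) = sup{g(x) : x ∈ X, x ≤ k}. Set Y = K ∖ {⊥, ⊤} and let C be the closure of {Γ(ĝ) : g ∈ Aut(X)} in the hyperspace of closed subsets of K × K with the Vietoris topology. Then: (i) if A, B ∈ C satisfy A ∩ (Y × Y) = B ∩ (Y × Y) ≠ ∅, then A = B; (ii) the only elements A ∈ C with A ∩ (Y × Y) = ∅ are (K × {⊥}) ∪ ({⊤} × K) and ({⊥} × K) ∪ (K × {⊤}). -/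

import Mathlib

set_option linter.unusedSectionVars false
set_option maxHeartbeats 1000000

/-- The hyperspace of closed subsets of a topological space (including `∅`). -/
abbrev HClosed (Z : Type*) [TopologicalSpace Z] := {A : Set Z // IsClosed A}

/-- The Vietoris topology on the hyperspace of closed subsets: generated by the sets
`{A | A ∩ W ≠ ∅}` and `{A | A ⊆ W}` for `W` open. -/
def vietorisTop (Z : Type*) [TopologicalSpace Z] : TopologicalSpace (HClosed Z) :=
  TopologicalSpace.generateFrom
    ({s | ∃ W : Set Z, IsOpen W ∧ s = {A : HClosed Z | ((A : Set Z) ∩ W).Nonempty}} ∪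
     {s | ∃ W : Set Z, IsOpen W ∧ s = {A : HClosed Z | (A : Set Z) ⊆ W}})

/-- A linear order is ultrahomogeneous if any increasing finite tuple can be mapped onto any
other increasing tuple of the same length by an order-automorphism. -/
def UltrahomogeneousOrder (X : Type*) [LinearOrder X] : Prop :=
  ∀ (n : ℕ) (x y : Fin n → X), StrictMono x → StrictMono y →
    ∃ g : X ≃o X, ∀ i : Fin n, g (x i) = y i
section G1
variable {X : Type*} [LinearOrder X] [Infinite X]

lemma uh_pair : ∃ a b : X, a < b := by
  obtain ⟨a, b, hab⟩ := (exists_pair_ne X)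
  rcases lt_or_gt_of_ne hab with h | h
  · exact ⟨a, b, h⟩
  · exact ⟨b, a, h⟩

lemma strictMono_fin1 (a : X) : StrictMono (![a]) := by
  intro i j hij
  exact absurd hij (by omega)

lemma strictMono_fin2 {a b : X} (h : a < b) : StrictMono (![a, b]) := by
  intro i j hij
  fin_cases i <;> fin_cases j <;> simp_all

lemma uh_map_one (hX : UltrahomogeneousOrder X) (u a : X) : ∃ g : X ≃o X, g u = a := by
  obtain ⟨g, hg⟩ := hX 1 ![u] ![a] (strictMono_fin1 u) (strictMono_fin1 a)
  exact ⟨g, by simpa using hg 0⟩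

lemma uh_map_pair (hX : UltrahomogeneousOrder X) {a b c d : X} (hab : a < b) (hcd : c < d) :
    ∃ g : X ≃o X, g a = c ∧ g b = d := by
  obtain ⟨g, hg⟩ := hX 2 ![a, b] ![c, d] (strictMono_fin2 hab) (strictMono_fin2 hcd)
  exact ⟨g, by simpa using hg 0, by simpa using hg 1⟩

lemma uh_noMax (hX : UltrahomogeneousOrder X) (a : X) : ∃ b, a < b := by
  obtain ⟨u, v, huv⟩ := uh_pair (X := X)
  obtain ⟨g, hgu⟩ := uh_map_one hX u a
  exact ⟨g v, hgu ▸ g.strictMono huv⟩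

lemma uh_noMin (hX : UltrahomogeneousOrder X) (a : X) : ∃ b, b < a := by
  obtain ⟨u, v, huv⟩ := uh_pair (X := X)
  obtain ⟨g, hgv⟩ := uh_map_one hX v a
  exact ⟨g u, hgv ▸ g.strictMono huv⟩

lemma uh_dense (hX : UltrahomogeneousOrder X) {a b : X} (hab : a < b) : ∃ c, a < c ∧ c < b := by
  obtain ⟨u, v, huv⟩ := uh_pair (X := X)
  obtain ⟨w, hvw⟩ := uh_noMax hX v
  obtain ⟨g, hgu, hgw⟩ := uh_map_pair hX (huv.trans hvw) hab
  exact ⟨g v, hgu ▸ g.strictMono huv, hgw ▸ g.strictMono hvw⟩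

end G1
section G2
variable {X K : Type*} [LinearOrder X] [CompleteLinearOrder K]
variable (e : X ↪o K)
variable (hdense : ∀ k : K, k = sSup ((fun x : X => e x) '' {x : X | e x ≤ k}) ∧
                       k = sInf ((fun x : X => e x) '' {x : X | k ≤ e x}))

include hdense in
lemma lt_exists_img {α k : K} (h : α < k) : ∃ x : X, α < e x ∧ e x ≤ k := by
  have h1 := (hdense k).1
  rw [h1] at h
  obtain ⟨b, ⟨x, hx, rfl⟩, hb⟩ := lt_sSup_iff.1 h
  exact ⟨x, hb, hx⟩

include hdense in
lemma exists_img_lt {α k : K} (h : k < α) : ∃ x : X, e x < α ∧ k ≤ e x := by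
  have h1 := (hdense k).2
  rw [h1] at h
  obtain ⟨b, ⟨x, hx, rfl⟩, hb⟩ := sInf_lt_iff.1 h
  exact ⟨x, hb, hx⟩

lemma bot_lt_img (hmin : ∀ a : X, ∃ b, b < a) (x : X) : ⊥ < e x := by
  obtain ⟨y, hy⟩ := hmin x
  exact lt_of_le_of_lt bot_le (e.strictMono hy)

lemma img_lt_top (hmax : ∀ a : X, ∃ b, a < b) (x : X) : e x < ⊤ := by
  obtain ⟨y, hy⟩ := hmax x
  exact lt_of_lt_of_le (e.strictMono hy) le_top

include e in
lemma ebot_lt_top (hmin : ∀ a : X, ∃ b, b < a) (x : X) : (⊥ : K) < ⊤ :=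
  lt_of_lt_of_le (bot_lt_img e hmin x) le_top

include hdense in
lemma imgdense (hd : ∀ a b : X, a < b → ∃ c, a < c ∧ c < b)
    {α β : K} (h : α < β) : ∃ x : X, α < e x ∧ e x < β := by
  obtain ⟨x₁, hx₁a, hx₁b⟩ := lt_exists_img e hdense h
  rcases lt_or_eq_of_le hx₁b with h1 | h1
  · exact ⟨x₁, hx₁a, h1⟩
  obtain ⟨x₂, hx₂a, hx₂b⟩ := exists_img_lt e hdense h
  rcases lt_or_eq_of_le hx₂b with h2 | h2
  · exact ⟨x₂, h2, hx₂a⟩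
  obtain ⟨x₃, h3, h4⟩ := hd x₂ x₁ (e.strictMono.lt_iff_lt.1 (by rw [← h2, h1]; exact h))
  exact ⟨x₃, by rw [h2]; exact e.strictMono h3, by rw [← h1]; exact e.strictMono h4⟩

include hdense in
lemma sup_Iio (hd : ∀ a b : X, a < b → ∃ c, a < c ∧ c < b)
    (E : X → K) (hE : StrictMono E) (hrange : Set.range E = Set.range (e : X → K)) (x : X) :
    E x = sSup (E '' Set.Iio x) := by
  refine le_antisymm ?_ (sSup_le ?_)
  · by_contra hlt
    push_neg at hlt
    obtain ⟨z, hz1, hz2⟩ := imgdense e hdense hd hlt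
    obtain ⟨z', hz'⟩ : ∃ z', E z' = e z := by
      have : (e z : K) ∈ Set.range E := by rw [hrange]; exact ⟨z, rfl⟩
      obtain ⟨z', hz'⟩ := this; exact ⟨z', hz'⟩
    have hz'x : z' < x := hE.lt_iff_lt.1 (by rw [hz']; exact hz2)
    have : E z' ≤ sSup (E '' Set.Iio x) := le_sSup ⟨z', hz'x, rfl⟩
    rw [hz'] at this
    exact absurd (lt_of_le_of_lt this hz1) (lt_irrefl _)
  · rintro b ⟨z, hz, rfl⟩
    exact le_of_lt (hE hz)

end G2
section G3
variable {X K : Type*} [LinearOrder X] [CompleteLinearOrder K]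
variable (e : X ↪o K)
variable (hdense : ∀ k : K, k = sSup ((fun x : X => e x) '' {x : X | e x ≤ k}) ∧
                       k = sInf ((fun x : X => e x) '' {x : X | k ≤ e x}))
variable (hatf : (X ≃o X) → K → K)
variable (hhat : ∀ (g : X ≃o X) (k : K),
      hatf g k = sSup ((fun x : X => e (g x)) '' {x : X | e x ≤ k}))

include hhat in
lemma hat_mono (g : X ≃o X) : Monotone (hatf g) := by
  intro k k' hk
  rw [hhat g k, hhat g k']
  exact sSup_le_sSup (Set.image_mono (fun x hx => le_trans hx hk))

include hhat in
lemma hat_e (g : X ≃o X) (x : X) : hatf g (e x) = e (g x) := by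
  rw [hhat]
  refine le_antisymm (sSup_le ?_) (le_sSup ⟨x, le_refl _, rfl⟩)
  rintro b ⟨x', hx', rfl⟩
  exact e.monotone (g.monotone (e.strictMono.le_iff_le.1 hx'))

include hhat in
lemma hat_bot (hmin : ∀ a : X, ∃ b, b < a) (g : X ≃o X) : hatf g ⊥ = ⊥ := by
  rw [hhat]
  have : {x : X | e x ≤ ⊥} = ∅ := by
    ext x
    simp only [Set.mem_setOf_eq, Set.mem_empty_iff_false, iff_false]
    intro h
    obtain ⟨y, hy⟩ := hmin x
    exact absurd (lt_of_lt_of_le (e.strictMono hy) (h.trans bot_le)) (lt_irrefl _)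
  rw [this, Set.image_empty, sSup_empty]

include hdense hhat in
lemma hat_top (g : X ≃o X) : hatf g ⊤ = ⊤ := by
  rw [hhat]
  have h2 : {x : X | e x ≤ ⊤} = Set.univ := by ext x; simp
  refine le_antisymm le_top ?_
  have h3 := (hdense ⊤).1
  rw [h2, Set.image_univ]
  rw [h2, Set.image_univ] at h3
  calc (⊤:K) = sSup (Set.range fun x : X => e x) := h3
    _ ≤ sSup (Set.range fun x : X => e (g x)) := by
        apply sSup_le_sSup
        rintro b ⟨x, rfl⟩
        exact ⟨g.symm x, by simp⟩

include hdense hhat in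
lemma hat_strictMono (hd : ∀ a b : X, a < b → ∃ c, a < c ∧ c < b)
    (g : X ≃o X) : StrictMono (hatf g) := by
  intro k k' hk
  obtain ⟨x₁, h1, h2⟩ := imgdense e hdense hd hk
  obtain ⟨x₂, h3, h4⟩ := imgdense e hdense hd h2
  have ha : hatf g k ≤ e (g x₁) := by
    rw [hhat]
    apply sSup_le
    rintro b ⟨x', hx', rfl⟩
    exact e.monotone (g.monotone (le_of_lt (e.strictMono.lt_iff_lt.1
      (lt_of_le_of_lt hx' h1))))
  have hb : e (g x₂) ≤ hatf g k' := by
    rw [hhat]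
    exact le_sSup ⟨x₂, le_of_lt h4, rfl⟩
  exact lt_of_le_of_lt ha (lt_of_lt_of_le (e.strictMono (g.strictMono
    (e.strictMono.lt_iff_lt.1 h3))) hb)

include hdense hhat in
lemma hat_surj (hd : ∀ a b : X, a < b → ∃ c, a < c ∧ c < b)
    (g : X ≃o X) : Function.Surjective (hatf g) := by
  intro y
  set S : Set X := {x | e (g x) ≤ y} with hS
  refine ⟨sSup ((fun x : X => e x) '' S), le_antisymm ?_ ?_⟩
  · rw [hhat]
    apply sSup_le
    rintro b ⟨x, hx, rfl⟩
    by_contra hgt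
    push_neg at hgt
    -- hx : e x ≤ sSup (e '' S), hgt : y < e (g x)
    have hek : e x = sSup ((fun x : X => e x) '' S) := by
      refine le_antisymm hx (sSup_le ?_)
      rintro b ⟨x', hx', rfl⟩
      have h1 : e (g x') < e (g x) := lt_of_le_of_lt hx' hgt
      exact e.monotone (le_of_lt ((e.strictMono.comp g.strictMono).lt_iff_lt.1 h1))
    have hEg : e (g x) = sSup ((fun z : X => e (g z)) '' Set.Iio x) :=
      sup_Iio e hdense hd (fun z : X => e (g z)) (e.strictMono.comp g.strictMono)
        (by
          ext b
          constructor
          · rintro ⟨z, rfl⟩; exact ⟨g z, rfl⟩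
          · rintro ⟨z, rfl⟩; exact ⟨g.symm z, by simp⟩) x
    rw [hEg] at hgt
    obtain ⟨b, ⟨z, hzx, rfl⟩, hyz⟩ := lt_sSup_iff.1 hgt
    have hez : e z < sSup ((fun x : X => e x) '' S) := by
      rw [← hek]; exact e.strictMono hzx
    obtain ⟨b, ⟨x', hx', rfl⟩, hzb⟩ := lt_sSup_iff.1 hez
    have hzx' : z < x' := e.strictMono.lt_iff_lt.1 hzb
    have h2 : e (g z) < e (g x') := e.strictMono (g.strictMono hzx')
    exact absurd (h2.trans_le hx') (not_lt.2 hyz.le)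
  · rw [hhat]
    have hy := (hdense y).1
    conv_lhs => rw [hy]
    apply sSup_le
    rintro b ⟨z, hz, rfl⟩
    have hmem : g.symm z ∈ S := by simpa [hS] using hz
    have hm : e (g.symm z) ≤ sSup ((fun x : X => e x) '' S) := le_sSup ⟨_, hmem, rfl⟩
    exact le_sSup ⟨g.symm z, hm, by simp⟩

end G3
section G4
variable {Z : Type*} [TopologicalSpace Z]

lemma viet_open_hit {W : Set Z} (hW : IsOpen W) :
    @IsOpen _ (vietorisTop Z) {A : HClosed Z | ((A : Set Z) ∩ W).Nonempty} :=
  TopologicalSpace.isOpen_generateFrom_of_mem (Or.inl ⟨W, hW, rfl⟩)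

lemma viet_open_sub {W : Set Z} (hW : IsOpen W) :
    @IsOpen _ (vietorisTop Z) {A : HClosed Z | (A : Set Z) ⊆ W} :=
  TopologicalSpace.isOpen_generateFrom_of_mem (Or.inr ⟨W, hW, rfl⟩)

lemma viet_closed_mem [T1Space Z] (z : Z) :
    @IsClosed _ (vietorisTop Z) {A : HClosed Z | z ∈ (A : Set Z)} := by
  letI : TopologicalSpace (HClosed Z) := vietorisTop Z
  rw [← isOpen_compl_iff]
  have : {A : HClosed Z | z ∈ (A : Set Z)}ᶜ = {A : HClosed Z | (A : Set Z) ⊆ {z}ᶜ} := by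
    ext A
    simp [Set.subset_compl_singleton_iff]
  rw [this]
  exact viet_open_sub isClosed_singleton.isOpen_compl

lemma viet_closed_hit_closed {F : Set Z} (hF : IsClosed F) :
    @IsClosed _ (vietorisTop Z) {A : HClosed Z | ((A : Set Z) ∩ F).Nonempty} := by
  letI : TopologicalSpace (HClosed Z) := vietorisTop Z
  rw [← isOpen_compl_iff]
  have : {A : HClosed Z | ((A : Set Z) ∩ F).Nonempty}ᶜ
      = {A : HClosed Z | (A : Set Z) ⊆ Fᶜ} := by
    ext A
    simp only [Set.mem_compl_iff, Set.mem_setOf_eq, Set.not_nonempty_iff_eq_empty]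
    constructor
    · intro h z hz
      intro hzF
      exact absurd (Set.eq_empty_iff_forall_notMem.1 h z) (by simp [hz, hzF])
    · intro h
      ext z
      simp only [Set.mem_inter_iff, Set.mem_empty_iff_false, iff_false]
      rintro ⟨h1, h2⟩
      exact h h1 h2
  rw [this]
  exact viet_open_sub hF.isOpen_compl

end G4

section G5
variable {K : Type*} [CompleteLinearOrder K] [TopologicalSpace K] [OrderTopology K]

lemma viet_closed_total :
    @IsClosed _ (vietorisTop (K × K)) {A : HClosed (K × K) | ∀ a : K, ∃ b : K, (a, b) ∈ (A : Set (K × K))} := by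
  letI : TopologicalSpace (HClosed (K × K)) := vietorisTop (K × K)
  have : {A : HClosed (K × K) | ∀ a : K, ∃ b : K, (a, b) ∈ (A : Set (K × K))}
      = ⋂ a : K, {A : HClosed (K × K) | ((A : Set (K × K)) ∩ ({a} ×ˢ Set.univ)).Nonempty} := by
    ext A
    simp only [Set.mem_setOf_eq, Set.mem_iInter]
    constructor
    · intro h a
      obtain ⟨b, hb⟩ := h a
      exact ⟨(a, b), hb, by simp⟩
    · intro h a
      obtain ⟨p, hp, hps⟩ := h a
      simp only [Set.mem_prod, Set.mem_singleton_iff, Set.mem_univ, and_true] at hps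
      exact ⟨p.2, by rwa [← hps, Prod.mk.eta]⟩
  rw [this]
  exact isClosed_iInter fun a => viet_closed_hit_closed (isClosed_singleton.prod isClosed_univ)

lemma viet_closed_surj :
    @IsClosed _ (vietorisTop (K × K)) {A : HClosed (K × K) | ∀ b : K, ∃ a : K, (a, b) ∈ (A : Set (K × K))} := by
  letI : TopologicalSpace (HClosed (K × K)) := vietorisTop (K × K)
  have : {A : HClosed (K × K) | ∀ b : K, ∃ a : K, (a, b) ∈ (A : Set (K × K))}
      = ⋂ b : K, {A : HClosed (K × K) | ((A : Set (K × K)) ∩ (Set.univ ×ˢ {b})).Nonempty} := by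
    ext A
    simp only [Set.mem_setOf_eq, Set.mem_iInter]
    constructor
    · intro h b
      obtain ⟨a, ha⟩ := h b
      exact ⟨(a, b), ha, by simp⟩
    · intro h b
      obtain ⟨p, hp, hps⟩ := h b
      simp only [Set.mem_prod, Set.mem_univ, Set.mem_singleton_iff, true_and] at hps
      exact ⟨p.1, by rwa [← hps, Prod.mk.eta]⟩
  rw [this]
  exact isClosed_iInter fun b => viet_closed_hit_closed (isClosed_univ.prod isClosed_singleton)

lemma viet_closed_mono (hdK : DenselyOrdered K) :
    @IsClosed _ (vietorisTop (K × K)) {A : HClosed (K × K) |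
      ∀ p ∈ (A : Set (K × K)), ∀ q ∈ (A : Set (K × K)), p.1 < q.1 → p.2 ≤ q.2} := by
  letI : TopologicalSpace (HClosed (K × K)) := vietorisTop (K × K)
  rw [← isOpen_compl_iff, isOpen_iff_forall_mem_open]
  intro A hA
  simp only [Set.mem_compl_iff, Set.mem_setOf_eq, not_forall] at hA
  obtain ⟨p, hp, q, hq, hlt, hnle⟩ := hA
  push_neg at hnle
  obtain ⟨m, hm1, hm2⟩ := exists_between hlt
  obtain ⟨n, hn1, hn2⟩ := exists_between hnle
  refine ⟨{B : HClosed (K × K) | ((B : Set (K × K)) ∩ (Set.Iio m ×ˢ Set.Ioi n)).Nonempty} ∩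
          {B : HClosed (K × K) | ((B : Set (K × K)) ∩ (Set.Ioi m ×ˢ Set.Iio n)).Nonempty}, ?_, ?_, ?_⟩
  · rintro B ⟨⟨p', hp', hp's⟩, ⟨q', hq', hq's⟩⟩
    simp only [Set.mem_compl_iff, Set.mem_setOf_eq, not_forall]
    simp only [Set.mem_prod, Set.mem_Iio, Set.mem_Ioi] at hp's hq's
    exact ⟨p', hp', q', hq', hp's.1.trans hq's.1, not_le.2 (hq's.2.trans hp's.2)⟩
  · exact IsOpen.inter (viet_open_hit ((isOpen_Iio).prod (isOpen_Ioi)))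
      (viet_open_hit ((isOpen_Ioi).prod (isOpen_Iio)))
  · constructor
    · exact ⟨p, hp, by simp [hm1, hn2]⟩
    · exact ⟨q, hq, by simp [hm2, hn1]⟩

end G5
section G7
variable {X K : Type*} [LinearOrder X] [CompleteLinearOrder K]
  [TopologicalSpace K] [OrderTopology K]
variable (e : X ↪o K)
variable (hdense : ∀ k : K, k = sSup ((fun x : X => e x) '' {x : X | e x ≤ k}) ∧
                       k = sInf ((fun x : X => e x) '' {x : X | k ≤ e x}))
variable (hatf : (X ≃o X) → K → K)
variable (hhat : ∀ (g : X ≃o X) (k : K),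
      hatf g k = sSup ((fun x : X => e (g x)) '' {x : X | e x ≤ k}))

include hdense hhat in
lemma graph_isClosed (hd : ∀ a b : X, a < b → ∃ c, a < c ∧ c < b) (g : X ≃o X) :
    IsClosed {p : K × K | p.2 = hatf g p.1} := by
  have hc : Continuous (hatf g) := by
    have hsm := hat_strictMono e hdense hatf hhat hd g
    have hsurj := hat_surj e hdense hatf hhat hd g
    have := (StrictMono.orderIsoOfSurjective _ hsm hsurj).continuous
    rwa [StrictMono.coe_orderIsoOfSurjective] at this
  exact isClosed_eq continuous_snd (hc.comp continuous_fst)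

include e hdense hhat in
lemma C_props (hd : ∀ a b : X, a < b → ∃ c, a < c ∧ c < b)
    (hmin : ∀ a : X, ∃ b, b < a)
    (C : Set (HClosed (K × K)))
    (hC : C = @closure _ (vietorisTop (K × K))
      {A : HClosed (K × K) | ∃ g : X ≃o X,
        (A : Set (K × K)) = {p : K × K | p.2 = hatf g p.1}}) :
    ∀ A ∈ C,
      (∀ p ∈ (A : Set (K × K)), ∀ q ∈ (A : Set (K × K)), p.1 < q.1 → p.2 ≤ q.2) ∧
      (∀ a : K, ∃ b : K, (a, b) ∈ (A : Set (K × K))) ∧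
      (∀ b : K, ∃ a : K, (a, b) ∈ (A : Set (K × K))) ∧
      ((⊥, ⊥) : K × K) ∈ (A : Set (K × K)) ∧ ((⊤, ⊤) : K × K) ∈ (A : Set (K × K)) := by
  letI : TopologicalSpace (HClosed (K × K)) := vietorisTop (K × K)
  have hdK : DenselyOrdered K := by
    refine ⟨fun a b h => ?_⟩
    obtain ⟨x, h1, h2⟩ := imgdense e hdense hd h
    exact ⟨e x, h1, h2⟩
  set P : Set (HClosed (K × K)) :=
    {A : HClosed (K × K) |
      ∀ p ∈ (A : Set (K × K)), ∀ q ∈ (A : Set (K × K)), p.1 < q.1 → p.2 ≤ q.2} ∩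
    ({A : HClosed (K × K) | ∀ a : K, ∃ b : K, (a, b) ∈ (A : Set (K × K))} ∩
     ({A : HClosed (K × K) | ∀ b : K, ∃ a : K, (a, b) ∈ (A : Set (K × K))} ∩
      ({A : HClosed (K × K) | ((⊥, ⊥) : K × K) ∈ (A : Set (K × K))} ∩
       {A : HClosed (K × K) | ((⊤, ⊤) : K × K) ∈ (A : Set (K × K))}))) with hP
  have hPclosed : IsClosed P :=
    (viet_closed_mono hdK).inter (viet_closed_total.inter (viet_closed_surj.inter
      ((viet_closed_mem _).inter (viet_closed_mem _))))
  have hsub : {A : HClosed (K × K) | ∃ g : X ≃o X,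
      (A : Set (K × K)) = {p : K × K | p.2 = hatf g p.1}} ⊆ P := by
    rintro A ⟨g, hA⟩
    refine ⟨?_, ?_, ?_, ?_, ?_⟩
    · rw [Set.mem_setOf_eq, hA]
      rintro p hp q hq hlt
      rw [Set.mem_setOf_eq] at hp hq
      rw [hp, hq]
      exact hat_mono e hatf hhat g (le_of_lt hlt)
    · intro a
      exact ⟨hatf g a, by rw [hA]; rfl⟩
    · intro b
      obtain ⟨a, ha⟩ := hat_surj e hdense hatf hhat hd g b
      exact ⟨a, by rw [hA]; exact ha.symm⟩
    · rw [Set.mem_setOf_eq, hA]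
      exact (hat_bot e hatf hhat hmin g).symm
    · rw [Set.mem_setOf_eq, hA]
      exact (hat_top e hdense hatf hhat g).symm
  intro A hA
  have : C ⊆ P := by
    rw [hC]
    exact closure_minimal hsub hPclosed
  exact this hA

end G7
def YYs (K : Type*) [CompleteLinearOrder K] : Set (K × K) :=
  {p : K × K | p.1 ≠ ⊥ ∧ p.1 ≠ ⊤ ∧ p.2 ≠ ⊥ ∧ p.2 ≠ ⊤}

section G8
variable {K : Type*} [CompleteLinearOrder K] [TopologicalSpace K] [OrderTopology K]

lemma core_bot (hbt : (⊥ : K) < ⊤) (hdK : DenselyOrdered K)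
    (A B : Set (K × K))
    (hAmono : ∀ p ∈ A, ∀ q ∈ A, Prod.fst p < Prod.fst q → Prod.snd p ≤ Prod.snd q)
    (hAsurj : ∀ y : K, ∃ x, (x, y) ∈ A)
    (hBmono : ∀ p ∈ B, ∀ q ∈ B, Prod.fst p < Prod.fst q → Prod.snd p ≤ Prod.snd q)
    (hBtot : ∀ x : K, ∃ y, (x, y) ∈ B)
    (hBcl : IsClosed B)
    (hBbot : ((⊥, ⊥) : K × K) ∈ B)
    (htr : A ∩ YYs K = B ∩ YYs K)
    (hne : (A ∩ YYs K).Nonempty)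
    (p : K) (hpA : (p, ⊥) ∈ A) : (p, ⊥) ∈ B := by
  obtain ⟨⟨r₀, s₀⟩, hzA, hr₁, hr₂, hs₁, hs₂⟩ := hne
  rw [← bot_lt_iff_ne_bot] at hr₁ hs₁
  rw [← lt_top_iff_ne_top] at hr₂ hs₂
  have hpr : p ≤ r₀ := by
    by_contra h
    push_neg at h
    have := hAmono (r₀, s₀) hzA (p, ⊥) hpA h
    exact absurd (lt_of_lt_of_le hs₁ this) (lt_irrefl _)
  rcases eq_or_lt_of_le (bot_le : (⊥ : K) ≤ p) with hp₁ | hp₁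
  · rw [← hp₁]; exact hBbot
  have hp₂ : p < ⊤ := lt_of_le_of_lt hpr hr₂
  by_contra hnB
  have hmem : Bᶜ ∈ nhds ((p, ⊥) : K × K) := hBcl.isOpen_compl.mem_nhds hnB
  rw [mem_nhds_prod_iff] at hmem
  obtain ⟨U, hU, V, hV, hUV⟩ := hmem
  obtain ⟨w, hw, hIco⟩ := exists_Ico_subset_of_mem_nhds hV ⟨⊤, hbt⟩
  obtain ⟨q, hq₁, hq₂⟩ := exists_between (lt_min hw hs₁)
  have hqw : q < w := lt_of_lt_of_le hq₂ (min_le_left _ _)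
  have hqs : q < s₀ := lt_of_lt_of_le hq₂ (min_le_right _ _)
  have hqt : q < ⊤ := hqs.trans hs₂
  obtain ⟨x, hxA⟩ := hAsurj q
  have hpx : p ≤ x := by
    by_contra h
    push_neg at h
    have := hAmono (x, q) hxA (p, ⊥) hpA h
    exact absurd (lt_of_lt_of_le hq₁ this) (lt_irrefl _)
  have hxt : x < ⊤ := by
    rcases lt_or_eq_of_le (le_top : x ≤ ⊤) with h | h
    · exact h
    · exact absurd (hAmono (r₀, s₀) hzA (⊤, q) (h ▸ hxA) hr₂) (not_le.2 hqs)
  rcases eq_or_lt_of_le hpx with hcase | hcase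
  · -- x = p
    have hpqB : (p, q) ∈ B := by
      have : ((p, q) : K × K) ∈ A ∩ YYs K := by
        refine ⟨hcase ▸ hxA, ?_, ?_, ?_, ?_⟩
        · exact ne_of_gt hp₁
        · exact ne_of_lt hp₂
        · exact ne_of_gt hq₁
        · exact ne_of_lt hqt
      exact (htr ▸ this).1
    exact absurd hpqB (hUV ⟨mem_of_mem_nhds hU, hIco ⟨bot_le, hqw⟩⟩)
  · -- p < x
    have hxB : (x, q) ∈ B := by
      have : ((x, q) : K × K) ∈ A ∩ YYs K := by
        refine ⟨hxA, ?_, ?_, ?_, ?_⟩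
        · exact ne_of_gt (hp₁.trans hcase)
        · exact ne_of_lt hxt
        · exact ne_of_gt hq₁
        · exact ne_of_lt hqt
      exact (htr ▸ this).1
    obtain ⟨y, hyB⟩ := hBtot p
    have hwy : w ≤ y := by
      by_contra h
      push_neg at h
      exact (hUV ⟨mem_of_mem_nhds hU, hIco ⟨bot_le, h⟩⟩) hyB
    have := hBmono (p, y) hyB (x, q) hxB hcase
    exact absurd ((hqw.trans_le hwy).trans_le this) (lt_irrefl _)

lemma core_top (hbt : (⊥ : K) < ⊤) (hdK : DenselyOrdered K)
    (A B : Set (K × K))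
    (hAmono : ∀ p ∈ A, ∀ q ∈ A, Prod.fst p < Prod.fst q → Prod.snd p ≤ Prod.snd q)
    (hAsurj : ∀ y : K, ∃ x, (x, y) ∈ A)
    (hBmono : ∀ p ∈ B, ∀ q ∈ B, Prod.fst p < Prod.fst q → Prod.snd p ≤ Prod.snd q)
    (hBtot : ∀ x : K, ∃ y, (x, y) ∈ B)
    (hBcl : IsClosed B)
    (hBtop : ((⊤, ⊤) : K × K) ∈ B)
    (htr : A ∩ YYs K = B ∩ YYs K)
    (hne : (A ∩ YYs K).Nonempty)
    (p : K) (hpA : (p, ⊤) ∈ A) : (p, ⊤) ∈ B := by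
  obtain ⟨⟨r₀, s₀⟩, hzA, hr₁, hr₂, hs₁, hs₂⟩ := hne
  rw [← bot_lt_iff_ne_bot] at hr₁ hs₁
  rw [← lt_top_iff_ne_top] at hr₂ hs₂
  have hpr : r₀ ≤ p := by
    by_contra h
    push_neg at h
    have := hAmono (p, ⊤) hpA (r₀, s₀) hzA h
    exact absurd (lt_of_le_of_lt this hs₂) (lt_irrefl _)
  rcases eq_or_lt_of_le (le_top : p ≤ ⊤) with hp₂ | hp₂
  · rw [hp₂]; exact hBtop
  have hp₁ : ⊥ < p := lt_of_lt_of_le hr₁ hpr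
  by_contra hnB
  have hmem : Bᶜ ∈ nhds ((p, ⊤) : K × K) := hBcl.isOpen_compl.mem_nhds hnB
  rw [mem_nhds_prod_iff] at hmem
  obtain ⟨U, hU, V, hV, hUV⟩ := hmem
  obtain ⟨w, hw, hIoc⟩ := exists_Ioc_subset_of_mem_nhds hV ⟨⊥, hbt⟩
  obtain ⟨q, hq₁, hq₂⟩ := exists_between (max_lt hw hs₂)
  have hqw : w < q := lt_of_le_of_lt (le_max_left _ _) hq₁
  have hqs : s₀ < q := lt_of_le_of_lt (le_max_right _ _) hq₁
  have hqb : ⊥ < q := hs₁.trans hqs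
  obtain ⟨x, hxA⟩ := hAsurj q
  have hxp : x ≤ p := by
    by_contra h
    push_neg at h
    have := hAmono (p, ⊤) hpA (x, q) hxA h
    exact absurd (lt_of_le_of_lt this hq₂) (lt_irrefl _)
  have hxb : ⊥ < x := by
    rcases lt_or_eq_of_le (bot_le : (⊥ : K) ≤ x) with h | h
    · exact h
    · exact absurd (hAmono (⊥, q) (h ▸ hxA) (r₀, s₀) hzA hr₁) (not_le.2 hqs)
  rcases eq_or_lt_of_le hxp with hcase | hcase
  · -- x = p
    have hpqB : (p, q) ∈ B := by
      have : ((p, q) : K × K) ∈ A ∩ YYs K := by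
        refine ⟨hcase ▸ hxA, ?_, ?_, ?_, ?_⟩
        · exact ne_of_gt hp₁
        · exact ne_of_lt hp₂
        · exact ne_of_gt hqb
        · exact ne_of_lt hq₂
      exact (htr ▸ this).1
    exact absurd hpqB (hUV ⟨mem_of_mem_nhds hU, hIoc ⟨hqw, le_top⟩⟩)
  · -- x < p
    have hxB : (x, q) ∈ B := by
      have : ((x, q) : K × K) ∈ A ∩ YYs K := by
        refine ⟨hxA, ?_, ?_, ?_, ?_⟩
        · exact ne_of_gt hxb
        · exact ne_of_lt (hcase.trans hp₂)
        · exact ne_of_gt hqb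
        · exact ne_of_lt hq₂
      exact (htr ▸ this).1
    obtain ⟨y, hyB⟩ := hBtot p
    have hwy : y ≤ w := by
      by_contra h
      push_neg at h
      exact (hUV ⟨mem_of_mem_nhds hU, hIoc ⟨h, le_top⟩⟩) hyB
    have := hBmono (x, q) hxB (p, y) hyB hcase
    exact absurd (lt_of_le_of_lt (this.trans hwy) hqw) (lt_irrefl _)

end G8
section G9
variable {K : Type*} [CompleteLinearOrder K] [TopologicalSpace K] [OrderTopology K]

lemma YYs_swap : Prod.swap ⁻¹' (YYs K) = YYs K := by
  ext p
  exact ⟨fun ⟨a, b, c, d⟩ => ⟨c, d, a, b⟩, fun ⟨a, b, c, d⟩ => ⟨c, d, a, b⟩⟩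

lemma swap_mono {A : Set (K × K)}
    (hAmono : ∀ p ∈ A, ∀ q ∈ A, Prod.fst p < Prod.fst q → Prod.snd p ≤ Prod.snd q) :
    ∀ p ∈ Prod.swap ⁻¹' A, ∀ q ∈ Prod.swap ⁻¹' A,
      Prod.fst p < Prod.fst q → Prod.snd p ≤ Prod.snd q := by
  intro p hp q hq hlt
  by_contra h
  push_neg at h
  have := hAmono q.swap hq p.swap hp h
  simp only [Prod.fst_swap, Prod.snd_swap] at this
  exact absurd (lt_of_le_of_lt this hlt) (lt_irrefl _)

lemma part_i_subset (hbt : (⊥ : K) < ⊤) (hdK : DenselyOrdered K)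
    (A B : Set (K × K))
    (hAmono : ∀ p ∈ A, ∀ q ∈ A, Prod.fst p < Prod.fst q → Prod.snd p ≤ Prod.snd q)
    (hAtot : ∀ x : K, ∃ y, (x, y) ∈ A)
    (hAsurj : ∀ y : K, ∃ x, (x, y) ∈ A)
    (hBmono : ∀ p ∈ B, ∀ q ∈ B, Prod.fst p < Prod.fst q → Prod.snd p ≤ Prod.snd q)
    (hBtot : ∀ x : K, ∃ y, (x, y) ∈ B)
    (hBsurj : ∀ y : K, ∃ x, (x, y) ∈ B)
    (hBcl : IsClosed B)
    (hBbot : ((⊥, ⊥) : K × K) ∈ B)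
    (hBtop : ((⊤, ⊤) : K × K) ∈ B)
    (htr : A ∩ YYs K = B ∩ YYs K)
    (hne : (A ∩ YYs K).Nonempty) :
    A ⊆ B := by
  have hswap_tr : (Prod.swap ⁻¹' A) ∩ YYs K = (Prod.swap ⁻¹' B) ∩ YYs K := by
    rw [← YYs_swap, ← Set.preimage_inter, ← Set.preimage_inter, htr]
  have hswap_ne : ((Prod.swap ⁻¹' A) ∩ YYs K).Nonempty := by
    obtain ⟨z, hz1, hz2⟩ := hne
    refine ⟨z.swap, by simpa using hz1, ?_⟩
    obtain ⟨a, b, c, d⟩ := hz2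
    exact ⟨c, d, a, b⟩
  have hA'mono := swap_mono hAmono
  have hB'mono := swap_mono hBmono
  have hA'surj : ∀ y : K, ∃ x, (x, y) ∈ Prod.swap ⁻¹' A := by
    intro y
    obtain ⟨b, hb⟩ := hAtot y
    exact ⟨b, by simpa using hb⟩
  have hB'tot : ∀ x : K, ∃ y, (x, y) ∈ Prod.swap ⁻¹' B := by
    intro x
    obtain ⟨a, ha⟩ := hBsurj x
    exact ⟨a, by simpa using ha⟩
  have hB'cl : IsClosed (Prod.swap ⁻¹' B) := hBcl.preimage continuous_swap
  have hB'bot : ((⊥, ⊥) : K × K) ∈ Prod.swap ⁻¹' B := by simpa using hBbot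
  have hB'top : ((⊤, ⊤) : K × K) ∈ Prod.swap ⁻¹' B := by simpa using hBtop
  intro z hz
  by_cases hzY : z ∈ YYs K
  · exact (htr ▸ (Set.mem_inter hz hzY)).1
  · simp only [YYs, Set.mem_setOf_eq, not_and_or, not_not, not_ne_iff] at hzY
    obtain ⟨z₁, z₂⟩ := z
    rcases hzY with h | h | h | h
    all_goals simp only at h
    · subst h
      have hz' : ((z₂, ⊥) : K × K) ∈ Prod.swap ⁻¹' A := by simpa using hz
      have := core_bot hbt hdK _ _ hA'mono hA'surj hB'mono hB'tot hB'cl hB'bot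
        hswap_tr hswap_ne z₂ hz'
      simpa using this
    · subst h
      have hz' : ((z₂, ⊤) : K × K) ∈ Prod.swap ⁻¹' A := by simpa using hz
      have := core_top hbt hdK _ _ hA'mono hA'surj hB'mono hB'tot hB'cl hB'top
        hswap_tr hswap_ne z₂ hz'
      simpa using this
    · subst h
      exact core_bot hbt hdK A B hAmono hAsurj hBmono hBtot hBcl hBbot htr hne z₁ hz
    · subst h
      exact core_top hbt hdK A B hAmono hAsurj hBmono hBtot hBcl hBtop htr hne z₁ hz

end G9
section G10
variable {K : Type*} [CompleteLinearOrder K] [TopologicalSpace K] [OrderTopology K]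

lemma branch_bot (hbt : (⊥ : K) < ⊤) (hdK : DenselyOrdered K)
    (A : Set (K × K))
    (hAcl : IsClosed A)
    (hAmono : ∀ p ∈ A, ∀ q ∈ A, Prod.fst p < Prod.fst q → Prod.snd p ≤ Prod.snd q)
    (hAtot : ∀ x : K, ∃ y, (x, y) ∈ A)
    (hAsurj : ∀ y : K, ∃ x, (x, y) ∈ A)
    (htr0 : A ∩ YYs K = ∅)
    {k₀ : K} (hk₁ : ⊥ < k₀) (hk₂ : k₀ < ⊤) (hk₀ : (k₀, ⊥) ∈ A) :
    A = {p : K × K | p.2 = ⊥ ∨ p.1 = ⊤} := by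
  have hYe : ∀ z ∈ A, z ∉ YYs K := by
    intro z hz hzY
    exact absurd (Set.mem_inter hz hzY) (htr0 ▸ Set.notMem_empty z)
  have ha : ∀ y : K, ⊥ < y → y < ⊤ → (⊤, y) ∈ A := by
    intro y hy1 hy2
    obtain ⟨x, hx⟩ := hAsurj y
    rcases eq_or_lt_of_le (bot_le : (⊥ : K) ≤ x) with h | h
    · exact absurd (hAmono (⊥, y) (h ▸ hx) (k₀, ⊥) hk₀ hk₁)
        (not_le.2 hy1)
    rcases eq_or_lt_of_le (le_top : x ≤ ⊤) with h2 | h2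
    · exact h2 ▸ hx
    · exact absurd ⟨ne_of_gt h, ne_of_lt h2, ne_of_gt hy1, ne_of_lt hy2⟩ (hYe _ hx)
  have hbn : ∀ k : K, ⊥ < k → k < ⊤ → (k, ⊥) ∈ A := by
    intro k h1 h2
    obtain ⟨y, hy⟩ := hAtot k
    rcases eq_or_lt_of_le (bot_le : (⊥ : K) ≤ y) with h3 | h3
    · exact h3 ▸ hy
    rcases eq_or_lt_of_le (le_top : y ≤ ⊤) with h4 | h4
    · exfalso
      obtain ⟨s, hs1, hs2⟩ := exists_between hbt
      exact absurd (hAmono (k, ⊤) (h4 ▸ hy) (⊤, s) (ha s hs1 hs2) h2) (not_le.2 hs2)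
    · exact absurd ⟨ne_of_gt h1, ne_of_lt h2, ne_of_gt h3, ne_of_lt h4⟩ (hYe _ hy)
  have hcl1 : Set.Icc (⊥ : K) ⊤ ×ˢ ({⊥} : Set K) ⊆ A := by
    have hsub : Set.Ioo (⊥ : K) ⊤ ×ˢ ({⊥} : Set K) ⊆ A := by
      rintro ⟨a, b⟩ ⟨⟨h1, h2⟩, hb⟩
      simp only [Set.mem_singleton_iff] at hb
      subst hb
      exact hbn a h1 h2
    have := closure_mono hsub
    rw [closure_prod_eq, closure_Ioo (ne_of_lt hbt), closure_singleton, hAcl.closure_eq] at this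
    exact this
  have hcl2 : ({⊤} : Set K) ×ˢ Set.Icc (⊥ : K) ⊤ ⊆ A := by
    have hsub : ({⊤} : Set K) ×ˢ Set.Ioo (⊥ : K) ⊤ ⊆ A := by
      rintro ⟨a, b⟩ ⟨ha', h1, h2⟩
      simp only [Set.mem_singleton_iff] at ha'
      subst ha'
      exact ha b h1 h2
    have := closure_mono hsub
    rw [closure_prod_eq, closure_Ioo (ne_of_lt hbt), closure_singleton, hAcl.closure_eq] at this
    exact this
  ext ⟨p₁, p₂⟩
  constructor
  · intro hz
    by_contra hcon
    simp only [Set.mem_setOf_eq, not_or] at hcon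
    obtain ⟨hc1, hc2⟩ := hcon
    rcases eq_or_lt_of_le (le_top : p₂ ≤ ⊤) with h4 | h4
    · obtain ⟨s, hs1, hs2⟩ := exists_between hbt
      exact absurd (hAmono (p₁, ⊤) (h4 ▸ hz) (⊤, s) (ha s hs1 hs2)
        (lt_top_iff_ne_top.2 hc2)) (not_le.2 hs2)
    have h3 : ⊥ < p₂ := bot_lt_iff_ne_bot.2 hc1
    rcases eq_or_lt_of_le (bot_le : (⊥ : K) ≤ p₁) with h1 | h1
    · exact absurd (hAmono (⊥, p₂) (h1 ▸ hz) (k₀, ⊥) hk₀ hk₁) (not_le.2 h3)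
    · exact absurd ⟨ne_of_gt h1, hc2, hc1, ne_of_lt h4⟩ (hYe _ hz)
  · rintro (h | h)
    · subst h; exact hcl1 ⟨⟨bot_le, le_top⟩, rfl⟩
    · subst h; exact hcl2 ⟨rfl, bot_le, le_top⟩

lemma branch_top (hbt : (⊥ : K) < ⊤) (hdK : DenselyOrdered K)
    (A : Set (K × K))
    (hAcl : IsClosed A)
    (hAmono : ∀ p ∈ A, ∀ q ∈ A, Prod.fst p < Prod.fst q → Prod.snd p ≤ Prod.snd q)
    (hAtot : ∀ x : K, ∃ y, (x, y) ∈ A)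
    (hAsurj : ∀ y : K, ∃ x, (x, y) ∈ A)
    (htr0 : A ∩ YYs K = ∅)
    {k₀ : K} (hk₁ : ⊥ < k₀) (hk₂ : k₀ < ⊤) (hk₀ : (k₀, ⊤) ∈ A) :
    A = {p : K × K | p.1 = ⊥ ∨ p.2 = ⊤} := by
  have hYe : ∀ z ∈ A, z ∉ YYs K := by
    intro z hz hzY
    exact absurd (Set.mem_inter hz hzY) (htr0 ▸ Set.notMem_empty z)
  have ha : ∀ y : K, ⊥ < y → y < ⊤ → (⊥, y) ∈ A := by
    intro y hy1 hy2
    obtain ⟨x, hx⟩ := hAsurj y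
    rcases eq_or_lt_of_le (le_top : x ≤ ⊤) with h | h
    · exact absurd (hAmono (k₀, ⊤) hk₀ (⊤, y) (h ▸ hx) hk₂) (not_le.2 hy2)
    rcases eq_or_lt_of_le (bot_le : (⊥ : K) ≤ x) with h2 | h2
    · exact h2 ▸ hx
    · exact absurd ⟨ne_of_gt h2, ne_of_lt h, ne_of_gt hy1, ne_of_lt hy2⟩ (hYe _ hx)
  have hbn : ∀ k : K, ⊥ < k → k < ⊤ → (k, ⊤) ∈ A := by
    intro k h1 h2
    obtain ⟨y, hy⟩ := hAtot k
    rcases eq_or_lt_of_le (le_top : y ≤ ⊤) with h4 | h4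
    · exact h4 ▸ hy
    rcases eq_or_lt_of_le (bot_le : (⊥ : K) ≤ y) with h3 | h3
    · exfalso
      obtain ⟨s, hs1, hs2⟩ := exists_between hbt
      exact absurd (hAmono (⊥, s) (ha s hs1 hs2) (k, ⊥) (h3 ▸ hy) h1) (not_le.2 hs1)
    · exact absurd ⟨ne_of_gt h1, ne_of_lt h2, ne_of_gt h3, ne_of_lt h4⟩ (hYe _ hy)
  have hcl1 : ({⊥} : Set K) ×ˢ Set.Icc (⊥ : K) ⊤ ⊆ A := by
    have hsub : ({⊥} : Set K) ×ˢ Set.Ioo (⊥ : K) ⊤ ⊆ A := by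
      rintro ⟨a, b⟩ ⟨ha', h1, h2⟩
      simp only [Set.mem_singleton_iff] at ha'
      subst ha'
      exact ha b h1 h2
    have := closure_mono hsub
    rw [closure_prod_eq, closure_Ioo (ne_of_lt hbt), closure_singleton, hAcl.closure_eq] at this
    exact this
  have hcl2 : Set.Icc (⊥ : K) ⊤ ×ˢ ({⊤} : Set K) ⊆ A := by
    have hsub : Set.Ioo (⊥ : K) ⊤ ×ˢ ({⊤} : Set K) ⊆ A := by
      rintro ⟨a, b⟩ ⟨⟨h1, h2⟩, hb⟩
      simp only [Set.mem_singleton_iff] at hb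
      subst hb
      exact hbn a h1 h2
    have := closure_mono hsub
    rw [closure_prod_eq, closure_Ioo (ne_of_lt hbt), closure_singleton, hAcl.closure_eq] at this
    exact this
  ext ⟨p₁, p₂⟩
  constructor
  · intro hz
    by_contra hcon
    simp only [Set.mem_setOf_eq, not_or] at hcon
    obtain ⟨hc1, hc2⟩ := hcon
    rcases eq_or_lt_of_le (le_top : p₁ ≤ ⊤) with h4 | h4
    · exact absurd (hAmono (k₀, ⊤) hk₀ (⊤, p₂) (h4 ▸ hz) hk₂)
        (not_le.2 (lt_top_iff_ne_top.2 hc2))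
    have h1 : ⊥ < p₁ := bot_lt_iff_ne_bot.2 hc1
    rcases eq_or_lt_of_le (bot_le : (⊥ : K) ≤ p₂) with h3 | h3
    · obtain ⟨s, hs1, hs2⟩ := exists_between hbt
      exact absurd (hAmono (⊥, s) (ha s hs1 hs2) (p₁, ⊥) (h3 ▸ hz) h1) (not_le.2 hs1)
    · exact absurd ⟨ne_of_gt h1, ne_of_lt h4, ne_of_gt h3, hc2⟩ (hYe _ hz)
  · rintro (h | h)
    · subst h; exact hcl1 ⟨rfl, bot_le, le_top⟩
    · subst h; exact hcl2 ⟨⟨bot_le, le_top⟩, rfl⟩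

end G10
section G11
variable {X K : Type*} [LinearOrder X] [CompleteLinearOrder K]
  [TopologicalSpace K] [OrderTopology K]
variable (e : X ↪o K)
variable (hdense : ∀ k : K, k = sSup ((fun x : X => e x) '' {x : X | e x ≤ k}) ∧
                       k = sInf ((fun x : X => e x) '' {x : X | k ≤ e x}))

lemma strictMono_snoc {n : ℕ} (f : Fin n → X) (x : X) (hf : StrictMono f)
    (hx : ∀ i, f i < x) : StrictMono (Fin.snoc f x) := by
  intro i j hij
  induction j using Fin.lastCases with
  | last =>
    have hi : i ≠ Fin.last n := ne_of_lt hij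
    obtain ⟨i', rfl⟩ := Fin.exists_castSucc_eq.2 hi
    rw [Fin.snoc_last, Fin.snoc_castSucc]
    exact hx i'
  | cast j' =>
    have hi : i ≠ Fin.last n := by
      intro h
      rw [h] at hij
      exact absurd (lt_of_le_of_lt (Fin.le_last _) hij) (lt_irrefl _)
    obtain ⟨i', rfl⟩ := Fin.exists_castSucc_eq.2 hi
    rw [Fin.snoc_castSucc, Fin.snoc_castSucc]
    exact hf (Fin.castSucc_lt_castSucc_iff.1 hij)

include hdense in
lemma chain_io (hd : ∀ a b : X, a < b → ∃ c, a < c ∧ c < b) :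
    ∀ (n : ℕ) {α β : K}, α < β →
      ∃ f : Fin n → X, StrictMono f ∧ ∀ i, α < e (f i) ∧ e (f i) < β := by
  intro n
  induction n with
  | zero => exact fun h => ⟨Fin.elim0, fun i => i.elim0, fun i => i.elim0⟩
  | succ m ih =>
    intro α β hαβ
    obtain ⟨x₀, hx₀a, hx₀b⟩ := imgdense e hdense hd hαβ
    obtain ⟨f, hf, hfi⟩ := ih hx₀a
    refine ⟨Fin.snoc f x₀, strictMono_snoc f x₀ hf
      (fun i => e.strictMono.lt_iff_lt.1 (hfi i).2), ?_⟩
    intro i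
    induction i using Fin.lastCases with
    | last => rw [Fin.snoc_last]; exact ⟨hx₀a, hx₀b⟩
    | cast i' => rw [Fin.snoc_castSucc]; exact ⟨(hfi i').1, lt_trans (hfi i').2 hx₀b⟩

lemma strictMono_glue {n₁ n₂ : ℕ} (f : Fin n₁ → X) (g : Fin n₂ → X)
    (hf : StrictMono f) (hg : StrictMono g) (hfg : ∀ i j, f i < g j) :
    StrictMono (fun i : Fin (n₁ + n₂) =>
      if h : (i : ℕ) < n₁ then f ⟨i, h⟩ else g ⟨(i : ℕ) - n₁, by omega⟩) := by
  intro i j hij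
  have hij' : (i : ℕ) < (j : ℕ) := hij
  by_cases hi : (i : ℕ) < n₁ <;> by_cases hj : (j : ℕ) < n₁
  · simp only [dif_pos hi, dif_pos hj]
    exact hf (show (⟨(i : ℕ), hi⟩ : Fin n₁) < ⟨(j : ℕ), hj⟩ from hij')
  · simp only [dif_pos hi, dif_neg hj]
    exact hfg _ _
  · omega
  · simp only [dif_neg hi, dif_neg hj]
    refine hg ?_
    have h1 := i.isLt
    have h2 := j.isLt
    exact show ((i : ℕ) - n₁) < ((j : ℕ) - n₁) by omega

include hdense in
lemma e_in_nhds (hd : ∀ a b : X, a < b → ∃ c, a < c ∧ c < b)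
    (hbt : (⊥ : K) < ⊤) {k : K} {U : Set K} (hU : U ∈ nhds k) : ∃ x : X, e x ∈ U := by
  by_cases hl : ∃ l, l < k
  · by_cases hu : ∃ u, k < u
    · obtain ⟨l, u, ⟨hlk, hku⟩, hsub⟩ := (mem_nhds_iff_exists_Ioo_subset' hl hu).1 hU
      obtain ⟨x, hx1, hx2⟩ := imgdense e hdense hd hlk
      exact ⟨x, hsub ⟨hx1, hx2.trans hku⟩⟩
    · push_neg at hu
      have hk : k = ⊤ := top_unique (hu ⊤)
      subst hk
      obtain ⟨l, hlk, hsub⟩ := exists_Ioc_subset_of_mem_nhds hU hl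
      obtain ⟨x, hx1, hx2⟩ := imgdense e hdense hd hlk
      exact ⟨x, hsub ⟨hx1, le_of_lt hx2⟩⟩
  · push_neg at hl
    have hk : k = ⊥ := bot_unique (hl ⊥)
    subst hk
    obtain ⟨w, hw, hsub⟩ := exists_Ico_subset_of_mem_nhds hU ⟨⊤, hbt⟩
    obtain ⟨x, hx1, hx2⟩ := imgdense e hdense hd hw
    exact ⟨x, hsub ⟨le_of_lt hx1, hx2⟩⟩

end G11
section G12
variable {X K : Type*} [LinearOrder X] [Infinite X] [CompleteLinearOrder K]
  [TopologicalSpace K] [OrderTopology K]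
variable (e : X ↪o K)
variable (hdense : ∀ k : K, k = sSup ((fun x : X => e x) '' {x : X | e x ≤ k}) ∧
                       k = sInf ((fun x : X => e x) '' {x : X | k ≤ e x}))
variable (hatf : (X ≃o X) → K → K)
variable (hhat : ∀ (g : X ≃o X) (k : K),
      hatf g k = sSup ((fun x : X => e (g x)) '' {x : X | e x ≤ k}))

lemma E1_closed : IsClosed {p : K × K | p.2 = ⊥ ∨ p.1 = ⊤} := by
  have : {p : K × K | p.2 = ⊥ ∨ p.1 = ⊤}
      = (Set.univ ×ˢ ({⊥} : Set K)) ∪ (({⊤} : Set K) ×ˢ Set.univ) := by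
    ext ⟨a, b⟩
    simp [eq_comm]
  rw [this]
  exact (isClosed_univ.prod isClosed_singleton).union (isClosed_singleton.prod isClosed_univ)

lemma E2_closed : IsClosed {p : K × K | p.1 = ⊥ ∨ p.2 = ⊤} := by
  have : {p : K × K | p.1 = ⊥ ∨ p.2 = ⊤}
      = (({⊥} : Set K) ×ˢ Set.univ) ∪ (Set.univ ×ˢ ({⊤} : Set K)) := by
    ext ⟨a, b⟩
    simp [eq_comm]
  rw [this]
  exact (isClosed_singleton.prod isClosed_univ).union (isClosed_univ.prod isClosed_singleton)

include hdense hhat in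
lemma E1_mem_C (hX : UltrahomogeneousOrder X)
    (hd : ∀ a b : X, a < b → ∃ c, a < c ∧ c < b)
    (hmin : ∀ a : X, ∃ b, b < a) (hmax : ∀ a : X, ∃ b, a < b) :
    (⟨{p : K × K | p.2 = ⊥ ∨ p.1 = ⊤}, E1_closed⟩ : HClosed (K × K)) ∈
      @closure _ (vietorisTop (K × K))
        {A : HClosed (K × K) | ∃ g : X ≃o X,
          (A : Set (K × K)) = {p : K × K | p.2 = hatf g p.1}} := by
  classical
  letI : TopologicalSpace (HClosed (K × K)) := vietorisTop (K × K)
  haveI : Nonempty X := ⟨(uh_pair (X := X)).choose⟩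
  have hbt : (⊥ : K) < ⊤ := ebot_lt_top e hmin (Classical.arbitrary X)
  set E : Set (K × K) := {p : K × K | p.2 = ⊥ ∨ p.1 = ⊤} with hE
  rw [mem_closure_iff]
  intro o ho hmemo
  have hbasis := @TopologicalSpace.isTopologicalBasis_of_subbasis _ (vietorisTop (K × K)) _ rfl
  obtain ⟨v, hv, hmemv, hvsub⟩ := hbasis.exists_subset_of_mem_open hmemo ho
  obtain ⟨f, ⟨hfin, hfsub⟩, rfl⟩ := hv
  -- Skolemize the witnesses W for members of f
  have hWfEx : ∀ s : Set (HClosed (K × K)), ∃ W : Set (K × K), s ∈ f →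
      (IsOpen W ∧ (((E ∩ W).Nonempty ∧
          s = {A : HClosed (K × K) | ((A : Set (K × K)) ∩ W).Nonempty}) ∨
        s = {A : HClosed (K × K) | (A : Set (K × K)) ⊆ W})) := by
    intro s
    by_cases hs : s ∈ f
    · rcases hfsub hs with ⟨W, hW, rfl⟩ | ⟨W, hW, rfl⟩
      · exact ⟨W, fun _ => ⟨hW, Or.inl ⟨Set.mem_sInter.1 hmemv _ hs, rfl⟩⟩⟩
      · exact ⟨W, fun _ => ⟨hW, Or.inr rfl⟩⟩
    · exact ⟨∅, fun h => absurd h hs⟩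
  choose Wf hWf using hWfEx
  set P : Set (HClosed (K × K)) → Prop :=
    fun s => s = {A : HClosed (K × K) | (A : Set (K × K)) ⊆ Wf s} with hP
  have hssub : ∀ s ∈ f, ¬ P s → ((E ∩ Wf s).Nonempty ∧
      s = {A : HClosed (K × K) | ((A : Set (K × K)) ∩ Wf s).Nonempty}) := by
    intro s hs hnp
    rcases (hWf s hs).2 with h | h
    · exact h
    · exact absurd h hnp
  -- The global open set W₀
  set W₀ : Set (K × K) := ⋂ s ∈ f, (if P s then Wf s else Set.univ) with hW₀
  have hW₀open : IsOpen W₀ := by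
    apply hfin.isOpen_biInter
    intro s hs
    by_cases h : P s
    · rw [if_pos h]; exact (hWf s hs).1
    · rw [if_neg h]; exact isOpen_univ
  have hEW₀ : E ⊆ W₀ := by
    intro z hz
    apply Set.mem_biInter
    intro s hs
    by_cases h : P s
    · rw [if_pos h]
      have : (⟨E, E1_closed⟩ : HClosed (K × K)) ∈ s := Set.mem_sInter.1 hmemv _ hs
      rw [h] at this
      exact this hz
    · rw [if_neg h]; exact Set.mem_univ _
  have hW₀Wf : ∀ s ∈ f, P s → W₀ ⊆ Wf s := by
    intro s hs hp z hz
    have := Set.mem_iInter₂.1 hz s hs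
    rwa [if_pos hp] at this
  -- tube lemma bounds
  obtain ⟨u1, v1, hu1, hv1, hsu1, hsv1, huv1⟩ :=
    generalized_tube_lemma isCompact_univ isCompact_singleton hW₀open
      (show Set.univ ×ˢ ({⊥} : Set K) ⊆ W₀ from
        fun p hp => hEW₀ (Or.inl hp.2))
  obtain ⟨w, hw, hIcow⟩ := exists_Ico_subset_of_mem_nhds
    (hv1.mem_nhds (hsv1 rfl)) ⟨⊤, hbt⟩
  have hbox1 : ∀ p : K × K, p.2 < w → p ∈ W₀ :=
    fun p h => huv1 ⟨hsu1 (Set.mem_univ _), hIcow ⟨bot_le, h⟩⟩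
  obtain ⟨u2, v2, hu2, hv2, hsu2, hsv2, huv2⟩ :=
    generalized_tube_lemma isCompact_singleton isCompact_univ hW₀open
      (show ({⊤} : Set K) ×ˢ Set.univ ⊆ W₀ from
        fun p hp => hEW₀ (Or.inr hp.1))
  obtain ⟨u₀, hu₀, hIocu⟩ := exists_Ioc_subset_of_mem_nhds
    (hu2.mem_nhds (hsu2 rfl)) ⟨⊥, hbt⟩
  have hbox2 : ∀ p : K × K, u₀ < p.1 → p ∈ W₀ :=
    fun p h => huv2 ⟨hIocu ⟨h, le_top⟩, hsv2 (Set.mem_univ _)⟩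
  -- hit data
  have hHitEx : ∀ s : Set (HClosed (K × K)), ∃ (x : X) (τ : X) (c d : K), s ∈ f → ¬ P s →
      (⊥ < c ∧ d < ⊤ ∧ ((∀ y : K, y < c → ((e x : K), y) ∈ Wf s) ∨
        (∀ k : K, d < k → ((k, (e τ : K)) : K × K) ∈ Wf s))) := by
    intro s
    by_cases hs : s ∈ f ∧ ¬ P s
    · obtain ⟨⟨z₁, z₂⟩, hzE, hzW⟩ := (hssub s hs.1 hs.2).1
      have hzn : Wf s ∈ nhds ((z₁, z₂) : K × K) := ((hWf s hs.1).1).mem_nhds hzW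
      rw [mem_nhds_prod_iff] at hzn
      obtain ⟨U, hU, V, hV, hUV⟩ := hzn
      rcases hzE with hz2 | hz1
      · simp only at hz2
        subst hz2
        obtain ⟨x, hx⟩ := e_in_nhds e hdense hd hbt hU
        obtain ⟨c, hc, hIco⟩ := exists_Ico_subset_of_mem_nhds hV ⟨⊤, hbt⟩
        exact ⟨x, Classical.arbitrary X, c, ⊥, fun _ _ =>
          ⟨hc, hbt, Or.inl fun y hy => hUV ⟨hx, hIco ⟨bot_le, hy⟩⟩⟩⟩
      · simp only at hz1
        subst hz1
        obtain ⟨τ, hτ⟩ := e_in_nhds e hdense hd hbt hV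
        obtain ⟨d, hdlt, hIoc⟩ := exists_Ioc_subset_of_mem_nhds hU ⟨⊥, hbt⟩
        exact ⟨Classical.arbitrary X, τ, ⊤, d, fun _ _ =>
          ⟨hbt, hdlt, Or.inr fun k hk => hUV ⟨hIoc ⟨hk, le_top⟩, hτ⟩⟩⟩
    · exact ⟨Classical.arbitrary X, Classical.arbitrary X, ⊤, ⊥, fun h1 h2 => absurd ⟨h1, h2⟩ hs⟩
  choose xf τf cf df hHit using hHitEx
  set Hits : Finset (Set (HClosed (K × K))) := hfin.toFinset.filter (fun s => ¬ P s) with hHits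
  have hmemHits : ∀ s, s ∈ Hits ↔ (s ∈ f ∧ ¬ P s) := by
    intro s
    simp [hHits, Set.Finite.mem_toFinset]
  -- xstar
  obtain ⟨xstar, hxstar, -⟩ := lt_exists_img e hdense hu₀
  set lowsF : Finset X := insert xstar (Hits.image xf) with hlowsF
  set n₁ : ℕ := lowsF.card with hn₁
  set lowIso := lowsF.orderIsoOfFin rfl with hlowIso
  set β : K := w ⊓ Hits.inf (fun s => cf s ⊓ e (τf s)) with hβ
  have hβpos : ⊥ < β := by
    rw [lt_inf_iff]
    refine ⟨hw, (Finset.lt_inf_iff hbt).2 fun s hs => ?_⟩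
    obtain ⟨hsf, hsp⟩ := (hmemHits s).1 hs
    exact lt_inf_iff.2 ⟨(hHit s hsf hsp).1, bot_lt_img e hmin _⟩
  obtain ⟨ηc, hηmono, hηi⟩ := chain_io e hdense hd n₁ hβpos
  set D : K := (u₀ ⊔ Hits.sup df) ⊔ lowsF.sup (fun x => e x) with hD
  have hDlt : D < ⊤ := by
    rw [sup_lt_iff, sup_lt_iff]
    refine ⟨⟨hu₀, (Finset.sup_lt_iff hbt).2 fun s hs => ?_⟩,
      (Finset.sup_lt_iff hbt).2 fun x _ => img_lt_top e hmax x⟩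
    obtain ⟨hsf, hsp⟩ := (hmemHits s).1 hs
    exact (hHit s hsf hsp).2.1
  set highTF : Finset X := Hits.image τf with hhighTF
  set n₂ : ℕ := highTF.card with hn₂
  set highIso := highTF.orderIsoOfFin rfl with hhighIso
  obtain ⟨hc, hhmono, hhi⟩ := chain_io e hdense hd n₂ hDlt
  have hβleτ : ∀ t ∈ highTF, β ≤ e t := by
    intro t ht
    obtain ⟨s, hs, rfl⟩ := Finset.mem_image.1 ht
    exact inf_le_right.trans ((Finset.inf_le hs).trans inf_le_right)
  -- build the automorphism
  have hlowmono : StrictMono (fun i : Fin n₁ => (lowIso i : X)) :=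
    fun i j h => Subtype.coe_lt_coe.2 (lowIso.strictMono h)
  have hcross1 : ∀ (i : Fin n₁) (j : Fin n₂), (lowIso i : X) < hc j := by
    intro i j
    have h1 : e (lowIso i : X) ≤ D :=
      le_sup_right.trans' (Finset.le_sup (lowIso i).2)
    exact e.strictMono.lt_iff_lt.1 (lt_of_le_of_lt h1 (hhi j).1)
  have hhighmono : StrictMono (fun j : Fin n₂ => (highIso j : X)) :=
    fun i j h => Subtype.coe_lt_coe.2 (highIso.strictMono h)
  have hcross2 : ∀ (i : Fin n₁) (j : Fin n₂), ηc i < (highIso j : X) := by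
    intro i j
    exact e.strictMono.lt_iff_lt.1 (lt_of_lt_of_le (hηi i).2 (hβleτ _ (highIso j).2))
  obtain ⟨g, hg⟩ := hX (n₁ + n₂)
    (fun i => if h : (i : ℕ) < n₁ then (lowIso ⟨(i : ℕ), h⟩ : X)
      else hc ⟨(i : ℕ) - n₁, by omega⟩)
    (fun i => if h : (i : ℕ) < n₁ then ηc ⟨(i : ℕ), h⟩
      else (highIso ⟨(i : ℕ) - n₁, by omega⟩ : X))
    (strictMono_glue _ _ hlowmono hhmono (fun i j => hcross1 i j))
    (strictMono_glue _ _ hηmono hhighmono (fun i j => hcross2 i j))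
  have hglow : ∀ i : Fin n₁, g (lowIso i : X) = ηc i := by
    intro i
    have h := hg ⟨(i : ℕ), by omega⟩
    simp only [Fin.eta] at h
    rw [dif_pos i.isLt, dif_pos i.isLt] at h
    simpa [Fin.eta] using h
  have hghigh : ∀ j : Fin n₂, g (hc j) = (highIso j : X) := by
    intro j
    have h := hg ⟨n₁ + (j : ℕ), by omega⟩
    simp only [Fin.val_mk] at h
    rw [dif_neg (by omega), dif_neg (by omega)] at h
    simpa [Nat.add_sub_cancel_left, Fin.eta] using h
  have hlowval : ∀ x ∈ lowsF, e (g x) < β := by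
    intro x hx
    obtain ⟨i, hi⟩ := lowIso.surjective ⟨x, hx⟩
    have hxi : (lowIso i : X) = x := congrArg Subtype.val hi
    rw [← hxi, hglow i]
    exact (hηi i).2
  -- the graph
  set Γ : Set (K × K) := {p : K × K | p.2 = hatf g p.1} with hΓ
  have hΓcl : IsClosed Γ := graph_isClosed e hdense hatf hhat hd g
  have hΓW₀ : Γ ⊆ W₀ := by
    rintro ⟨p₁, p₂⟩ hp
    simp only [hΓ, Set.mem_setOf_eq] at hp
    rcases le_or_gt p₁ (e xstar) with hle | hlt
    · refine hbox1 _ ?_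
      have h1 : hatf g p₁ ≤ hatf g (e xstar) := hat_mono e hatf hhat g hle
      rw [hat_e e hatf hhat] at h1
      have h2 : e (g xstar) < β :=
        hlowval xstar (Finset.mem_insert_self _ _)
      calc (p₁, p₂).2 = hatf g p₁ := hp
        _ ≤ e (g xstar) := h1
        _ < β := h2
        _ ≤ w := inf_le_left
    · exact hbox2 _ (hxstar.trans hlt)
  refine ⟨⟨Γ, hΓcl⟩, hvsub ?_, g, rfl⟩
  apply Set.mem_sInter.2
  intro s hs
  by_cases hp : P s
  · rw [hp]
    exact hΓW₀.trans (hW₀Wf s hs hp)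
  · rw [(hssub s hs hp).2]
    have hsH : s ∈ Hits := (hmemHits s).2 ⟨hs, hp⟩
    rcases (hHit s hs hp).2.2 with hcase | hcase
    · -- bottom hit
      have hxmem : xf s ∈ lowsF := Finset.mem_insert_of_mem (Finset.mem_image_of_mem _ hsH)
      have hval : e (g (xf s)) < cf s := by
        have h1 : e (g (xf s)) < β := hlowval _ hxmem
        have h2 : β ≤ cf s := inf_le_right.trans ((Finset.inf_le hsH).trans inf_le_left)
        exact lt_of_lt_of_le h1 h2
      refine ⟨((e (xf s) : K), hatf g (e (xf s))), rfl, ?_⟩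
      rw [hat_e e hatf hhat]
      exact hcase _ hval
    · -- top hit
      have hτmem : τf s ∈ highTF := Finset.mem_image_of_mem _ hsH
      obtain ⟨j, hj⟩ := highIso.surjective ⟨τf s, hτmem⟩
      have hτj : (highIso j : X) = τf s := congrArg Subtype.val hj
      refine ⟨((e (hc j) : K), hatf g (e (hc j))), rfl, ?_⟩
      rw [hat_e e hatf hhat, hghigh j, hτj]
      refine hcase _ ?_
      have h1 : df s ≤ D := le_sup_left.trans' (le_sup_right.trans' (Finset.le_sup hsH))
      exact lt_of_le_of_lt h1 (hhi j).1

end G12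
section G13
variable {X K : Type*} [LinearOrder X] [Infinite X] [CompleteLinearOrder K]
  [TopologicalSpace K] [OrderTopology K]
variable (e : X ↪o K)
variable (hdense : ∀ k : K, k = sSup ((fun x : X => e x) '' {x : X | e x ≤ k}) ∧
                       k = sInf ((fun x : X => e x) '' {x : X | k ≤ e x}))
variable (hatf : (X ≃o X) → K → K)
variable (hhat : ∀ (g : X ≃o X) (k : K),
      hatf g k = sSup ((fun x : X => e (g x)) '' {x : X | e x ≤ k}))

include hdense hhat in
lemma E2_mem_C (hX : UltrahomogeneousOrder X)
    (hd : ∀ a b : X, a < b → ∃ c, a < c ∧ c < b)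
    (hmin : ∀ a : X, ∃ b, b < a) (hmax : ∀ a : X, ∃ b, a < b) :
    (⟨{p : K × K | p.1 = ⊥ ∨ p.2 = ⊤}, E2_closed⟩ : HClosed (K × K)) ∈
      @closure _ (vietorisTop (K × K))
        {A : HClosed (K × K) | ∃ g : X ≃o X,
          (A : Set (K × K)) = {p : K × K | p.2 = hatf g p.1}} := by
  classical
  letI : TopologicalSpace (HClosed (K × K)) := vietorisTop (K × K)
  haveI : Nonempty X := ⟨(uh_pair (X := X)).choose⟩
  have hbt : (⊥ : K) < ⊤ := ebot_lt_top e hmin (Classical.arbitrary X)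
  set E : Set (K × K) := {p : K × K | p.1 = ⊥ ∨ p.2 = ⊤} with hE
  rw [mem_closure_iff]
  intro o ho hmemo
  have hbasis := @TopologicalSpace.isTopologicalBasis_of_subbasis _ (vietorisTop (K × K)) _ rfl
  obtain ⟨v, hv, hmemv, hvsub⟩ := hbasis.exists_subset_of_mem_open hmemo ho
  obtain ⟨f, ⟨hfin, hfsub⟩, rfl⟩ := hv
  have hWfEx : ∀ s : Set (HClosed (K × K)), ∃ W : Set (K × K), s ∈ f →
      (IsOpen W ∧ (((E ∩ W).Nonempty ∧
          s = {A : HClosed (K × K) | ((A : Set (K × K)) ∩ W).Nonempty}) ∨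
        s = {A : HClosed (K × K) | (A : Set (K × K)) ⊆ W})) := by
    intro s
    by_cases hs : s ∈ f
    · rcases hfsub hs with ⟨W, hW, rfl⟩ | ⟨W, hW, rfl⟩
      · exact ⟨W, fun _ => ⟨hW, Or.inl ⟨Set.mem_sInter.1 hmemv _ hs, rfl⟩⟩⟩
      · exact ⟨W, fun _ => ⟨hW, Or.inr rfl⟩⟩
    · exact ⟨∅, fun h => absurd h hs⟩
  choose Wf hWf using hWfEx
  set P : Set (HClosed (K × K)) → Prop :=
    fun s => s = {A : HClosed (K × K) | (A : Set (K × K)) ⊆ Wf s} with hP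
  have hssub : ∀ s ∈ f, ¬ P s → ((E ∩ Wf s).Nonempty ∧
      s = {A : HClosed (K × K) | ((A : Set (K × K)) ∩ Wf s).Nonempty}) := by
    intro s hs hnp
    rcases (hWf s hs).2 with h | h
    · exact h
    · exact absurd h hnp
  set W₀ : Set (K × K) := ⋂ s ∈ f, (if P s then Wf s else Set.univ) with hW₀
  have hW₀open : IsOpen W₀ := by
    apply hfin.isOpen_biInter
    intro s hs
    by_cases h : P s
    · rw [if_pos h]; exact (hWf s hs).1
    · rw [if_neg h]; exact isOpen_univ
  have hEW₀ : E ⊆ W₀ := by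
    intro z hz
    apply Set.mem_biInter
    intro s hs
    by_cases h : P s
    · rw [if_pos h]
      have : (⟨E, E2_closed⟩ : HClosed (K × K)) ∈ s := Set.mem_sInter.1 hmemv _ hs
      rw [h] at this
      exact this hz
    · rw [if_neg h]; exact Set.mem_univ _
  have hW₀Wf : ∀ s ∈ f, P s → W₀ ⊆ Wf s := by
    intro s hs hp z hz
    have := Set.mem_iInter₂.1 hz s hs
    rwa [if_pos hp] at this
  -- tube lemma bounds (mirrored)
  obtain ⟨u1, v1, hu1, hv1, hsu1, hsv1, huv1⟩ :=
    generalized_tube_lemma isCompact_singleton isCompact_univ hW₀open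
      (show ({⊥} : Set K) ×ˢ Set.univ ⊆ W₀ from
        fun p hp => hEW₀ (Or.inl hp.1))
  obtain ⟨w, hw, hIcow⟩ := exists_Ico_subset_of_mem_nhds
    (hu1.mem_nhds (hsu1 rfl)) ⟨⊤, hbt⟩
  have hbox1 : ∀ p : K × K, p.1 < w → p ∈ W₀ :=
    fun p h => huv1 ⟨hIcow ⟨bot_le, h⟩, hsv1 (Set.mem_univ _)⟩
  obtain ⟨u2, v2, hu2, hv2, hsu2, hsv2, huv2⟩ :=
    generalized_tube_lemma isCompact_univ isCompact_singleton hW₀open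
      (show Set.univ ×ˢ ({⊤} : Set K) ⊆ W₀ from
        fun p hp => hEW₀ (Or.inr hp.2))
  obtain ⟨u₀, hu₀, hIocu⟩ := exists_Ioc_subset_of_mem_nhds
    (hv2.mem_nhds (hsv2 rfl)) ⟨⊥, hbt⟩
  have hbox2 : ∀ p : K × K, u₀ < p.2 → p ∈ W₀ :=
    fun p h => huv2 ⟨hsu2 (Set.mem_univ _), hIocu ⟨h, le_top⟩⟩
  -- hit data (mirrored): left-edge hits give (τ, c) with ∀ k < c, (k, e τ) ∈ W;
  -- top-edge hits give (x, d) with ∀ y > d, (e x, y) ∈ W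
  have hHitEx : ∀ s : Set (HClosed (K × K)), ∃ (x : X) (τ : X) (c d : K), s ∈ f → ¬ P s →
      (⊥ < c ∧ d < ⊤ ∧ ((∀ k : K, k < c → ((k, (e τ : K)) : K × K) ∈ Wf s) ∨
        (∀ y : K, d < y → ((e x : K), y) ∈ Wf s))) := by
    intro s
    by_cases hs : s ∈ f ∧ ¬ P s
    · obtain ⟨⟨z₁, z₂⟩, hzE, hzW⟩ := (hssub s hs.1 hs.2).1
      have hzn : Wf s ∈ nhds ((z₁, z₂) : K × K) := ((hWf s hs.1).1).mem_nhds hzW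
      rw [mem_nhds_prod_iff] at hzn
      obtain ⟨U, hU, V, hV, hUV⟩ := hzn
      rcases hzE with hz1 | hz2
      · simp only at hz1
        subst hz1
        obtain ⟨τ, hτ⟩ := e_in_nhds e hdense hd hbt hV
        obtain ⟨c, hc, hIco⟩ := exists_Ico_subset_of_mem_nhds hU ⟨⊤, hbt⟩
        exact ⟨Classical.arbitrary X, τ, c, ⊥, fun _ _ =>
          ⟨hc, hbt, Or.inl fun k hk => hUV ⟨hIco ⟨bot_le, hk⟩, hτ⟩⟩⟩
      · simp only at hz2
        subst hz2
        obtain ⟨x, hx⟩ := e_in_nhds e hdense hd hbt hU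
        obtain ⟨d, hdlt, hIoc⟩ := exists_Ioc_subset_of_mem_nhds hV ⟨⊥, hbt⟩
        exact ⟨x, Classical.arbitrary X, ⊤, d, fun _ _ =>
          ⟨hbt, hdlt, Or.inr fun y hy => hUV ⟨hx, hIoc ⟨hy, le_top⟩⟩⟩⟩
    · exact ⟨Classical.arbitrary X, Classical.arbitrary X, ⊤, ⊥, fun h1 h2 => absurd ⟨h1, h2⟩ hs⟩
  choose xf τf cf df hHit using hHitEx
  set Hits : Finset (Set (HClosed (K × K))) := hfin.toFinset.filter (fun s => ¬ P s) with hHits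
  have hmemHits : ∀ s, s ∈ Hits ↔ (s ∈ f ∧ ¬ P s) := by
    intro s
    simp [hHits, Set.Finite.mem_toFinset]
  -- xstar : small source with large target
  obtain ⟨xstar, hxstar, -⟩ := exists_img_lt e hdense hw
  set upsF : Finset X := insert xstar (Hits.image xf) with hupsF
  set n₂ : ℕ := upsF.card with hn₂
  set upsIso := upsF.orderIsoOfFin rfl with hupsIso
  set β : K := (u₀ ⊔ Hits.sup df) ⊔ Hits.sup (fun s => e (τf s)) with hβ
  have hβlt : β < ⊤ := by
    rw [sup_lt_iff, sup_lt_iff]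
    refine ⟨⟨hu₀, (Finset.sup_lt_iff hbt).2 fun s hs => ?_⟩,
      (Finset.sup_lt_iff hbt).2 fun s _ => img_lt_top e hmax _⟩
    obtain ⟨hsf, hsp⟩ := (hmemHits s).1 hs
    exact (hHit s hsf hsp).2.1
  obtain ⟨hc, hhmono, hhi⟩ := chain_io e hdense hd n₂ hβlt
  set lowTF : Finset X := Hits.image τf with hlowTF
  set n₁ : ℕ := lowTF.card with hn₁
  set lowIso := lowTF.orderIsoOfFin rfl with hlowIso
  set D : K := w ⊓ (Hits.inf cf ⊓ upsF.inf (fun x => e x)) with hD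
  have hDpos : ⊥ < D := by
    rw [lt_inf_iff, lt_inf_iff]
    refine ⟨hw, (Finset.lt_inf_iff hbt).2 fun s hs => ?_,
      (Finset.lt_inf_iff hbt).2 fun x _ => bot_lt_img e hmin x⟩
    obtain ⟨hsf, hsp⟩ := (hmemHits s).1 hs
    exact (hHit s hsf hsp).1
  obtain ⟨lc, hlmono, hli⟩ := chain_io e hdense hd n₁ hDpos
  -- glue
  have hlowTFmono : StrictMono (fun i : Fin n₁ => (lowIso i : X)) :=
    fun i j h => Subtype.coe_lt_coe.2 (lowIso.strictMono h)
  have hupsmono : StrictMono (fun j : Fin n₂ => (upsIso j : X)) :=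
    fun i j h => Subtype.coe_lt_coe.2 (upsIso.strictMono h)
  have hcross1 : ∀ (i : Fin n₁) (j : Fin n₂), lc i < (upsIso j : X) := by
    intro i j
    have h1 : D ≤ e (upsIso j : X) :=
      (inf_le_right.trans inf_le_right).trans (Finset.inf_le (upsIso j).2)
    exact e.strictMono.lt_iff_lt.1 (lt_of_lt_of_le (hli i).2 h1)
  have hcross2 : ∀ (i : Fin n₁) (j : Fin n₂), (lowIso i : X) < hc j := by
    intro i j
    have h1 : e (lowIso i : X) ≤ β := by
      obtain ⟨s, hs, hτ⟩ := Finset.mem_image.1 (lowIso i).2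
      calc e (lowIso i : X) = e (τf s) := by rw [hτ]
        _ ≤ Hits.sup (fun s => e (τf s)) := Finset.le_sup (f := fun s => e (τf s)) hs
        _ ≤ β := le_sup_right
    exact e.strictMono.lt_iff_lt.1 (lt_of_le_of_lt h1 (hhi j).1)
  obtain ⟨g, hg⟩ := hX (n₁ + n₂)
    (fun i => if h : (i : ℕ) < n₁ then lc ⟨(i : ℕ), h⟩
      else (upsIso ⟨(i : ℕ) - n₁, by omega⟩ : X))
    (fun i => if h : (i : ℕ) < n₁ then (lowIso ⟨(i : ℕ), h⟩ : X)
      else hc ⟨(i : ℕ) - n₁, by omega⟩)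
    (strictMono_glue _ _ hlmono hupsmono (fun i j => hcross1 i j))
    (strictMono_glue _ _ hlowTFmono hhmono (fun i j => hcross2 i j))
  have hglow : ∀ i : Fin n₁, g (lc i) = (lowIso i : X) := by
    intro i
    have h := hg ⟨(i : ℕ), by omega⟩
    simp only [Fin.eta] at h
    rw [dif_pos i.isLt, dif_pos i.isLt] at h
    simpa [Fin.eta] using h
  have hghigh : ∀ j : Fin n₂, g (upsIso j : X) = hc j := by
    intro j
    have h := hg ⟨n₁ + (j : ℕ), by omega⟩
    simp only [Fin.val_mk] at h
    rw [dif_neg (by omega), dif_neg (by omega)] at h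
    simpa [Nat.add_sub_cancel_left, Fin.eta] using h
  have hupsval : ∀ x ∈ upsF, β < e (g x) := by
    intro x hx
    obtain ⟨j, hj⟩ := upsIso.surjective ⟨x, hx⟩
    have hxj : (upsIso j : X) = x := congrArg Subtype.val hj
    rw [← hxj, hghigh j]
    exact (hhi j).1
  set Γ : Set (K × K) := {p : K × K | p.2 = hatf g p.1} with hΓ
  have hΓcl : IsClosed Γ := graph_isClosed e hdense hatf hhat hd g
  have hΓW₀ : Γ ⊆ W₀ := by
    rintro ⟨p₁, p₂⟩ hp
    simp only [hΓ, Set.mem_setOf_eq] at hp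
    rcases le_or_gt (e xstar) p₁ with hle | hlt
    · refine hbox2 _ ?_
      have h1 : hatf g (e xstar) ≤ hatf g p₁ := hat_mono e hatf hhat g hle
      rw [hat_e e hatf hhat] at h1
      have h2 : β < e (g xstar) := hupsval xstar (Finset.mem_insert_self _ _)
      have : u₀ < e (g xstar) := lt_of_le_of_lt (le_sup_left.trans le_sup_left) h2
      calc u₀ < e (g xstar) := this
        _ ≤ hatf g p₁ := h1
        _ = (p₁, p₂).2 := hp.symm
    · exact hbox1 _ (hlt.trans hxstar)
  refine ⟨⟨Γ, hΓcl⟩, hvsub ?_, g, rfl⟩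
  apply Set.mem_sInter.2
  intro s hs
  by_cases hp : P s
  · rw [hp]
    exact hΓW₀.trans (hW₀Wf s hs hp)
  · rw [(hssub s hs hp).2]
    have hsH : s ∈ Hits := (hmemHits s).2 ⟨hs, hp⟩
    rcases (hHit s hs hp).2.2 with hcase | hcase
    · -- left-edge hit
      have hτmem : τf s ∈ lowTF := Finset.mem_image_of_mem _ hsH
      obtain ⟨i, hi⟩ := lowIso.surjective ⟨τf s, hτmem⟩
      have hτi : (lowIso i : X) = τf s := congrArg Subtype.val hi
      refine ⟨((e (lc i) : K), hatf g (e (lc i))), rfl, ?_⟩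
      rw [hat_e e hatf hhat, hglow i, hτi]
      refine hcase _ ?_
      have h1 : D ≤ cf s := inf_le_right.trans (inf_le_left.trans (Finset.inf_le hsH))
      exact lt_of_lt_of_le (hli i).2 h1
    · -- top-edge hit
      have hxmem : xf s ∈ upsF := Finset.mem_insert_of_mem (Finset.mem_image_of_mem _ hsH)
      refine ⟨((e (xf s) : K), hatf g (e (xf s))), rfl, ?_⟩
      rw [hat_e e hatf hhat]
      refine hcase _ ?_
      have h1 : df s ≤ β := le_sup_left.trans' (le_sup_right.trans' (Finset.le_sup hsH))
      exact lt_of_le_of_lt h1 (hupsval _ hxmem)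

end G13
/-- Condition (ER) for the graph compactification of `Aut(X)` of an infinite ultrahomogeneous
LOTS `X`: with `K` its least linearly ordered compactification, `Y = K \ {⊥, ⊤}` and `C` the
closure of the graphs `{Γ(ĝ)}` in the Vietoris hyperspace of `K × K`, (i) two members of `C`
with equal nonempty trace on `Y × Y` coincide, and (ii) the only members of `C` whose trace
on `Y × Y` is empty are `(K × {⊥}) ∪ ({⊤} × K)` and `({⊥} × K) ∪ (K × {⊤})`. -/
theorem stmt_19 {X K : Type*} [LinearOrder X] [Infinite X]
    (hX : UltrahomogeneousOrder X)
    [CompleteLinearOrder K] [TopologicalSpace K] [OrderTopology K]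
    (e : X ↪o K)
    (hdense : ∀ k : K, k = sSup ((fun x : X => e x) '' {x : X | e x ≤ k}) ∧
                       k = sInf ((fun x : X => e x) '' {x : X | k ≤ e x}))
    (hatf : (X ≃o X) → K → K)
    (hhat : ∀ (g : X ≃o X) (k : K),
      hatf g k = sSup ((fun x : X => e (g x)) '' {x : X | e x ≤ k}))
    (C : Set (HClosed (K × K)))
    (hC : C = @closure _ (vietorisTop (K × K))
      {A : HClosed (K × K) | ∃ g : X ≃o X,
        (A : Set (K × K)) = {p : K × K | p.2 = hatf g p.1}})
    (YY : Set (K × K))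
    (hYY : YY = {p : K × K | p.1 ≠ ⊥ ∧ p.1 ≠ ⊤ ∧ p.2 ≠ ⊥ ∧ p.2 ≠ ⊤}) :
    (∀ A ∈ C, ∀ B ∈ C, (A : Set (K × K)) ∩ YY = (B : Set (K × K)) ∩ YY →
        ((A : Set (K × K)) ∩ YY).Nonempty → A = B) ∧
    {A : HClosed (K × K) | A ∈ C ∧ (A : Set (K × K)) ∩ YY = ∅} =
      {A : HClosed (K × K) |
        (A : Set (K × K)) = {p : K × K | p.2 = ⊥ ∨ p.1 = ⊤} ∨
        (A : Set (K × K)) = {p : K × K | p.1 = ⊥ ∨ p.2 = ⊤}} := by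
  have hd : ∀ a b : X, a < b → ∃ c, a < c ∧ c < b := fun a b h => uh_dense hX h
  have hmin : ∀ a : X, ∃ b, b < a := uh_noMin hX
  have hmax : ∀ a : X, ∃ b, a < b := uh_noMax hX
  haveI : Nonempty X := ⟨(uh_pair (X := X)).choose⟩
  have hbt : (⊥ : K) < ⊤ := ebot_lt_top e hmin (Classical.arbitrary X)
  have hdK : DenselyOrdered K := by
    refine ⟨fun a b h => ?_⟩
    obtain ⟨x, h1, h2⟩ := imgdense e hdense hd h
    exact ⟨e x, h1, h2⟩
  have hYYs : YY = YYs K := hYY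
  have hprops := C_props e hdense hatf hhat hd hmin C hC
  constructor
  · -- part (i)
    intro A hA B hB htr hne
    obtain ⟨hAm, hAt, hAs, hAbot, hAtop⟩ := hprops A hA
    obtain ⟨hBm, hBt, hBs, hBbot, hBtop⟩ := hprops B hB
    rw [hYYs] at htr hne
    apply Subtype.ext
    apply Set.Subset.antisymm
    · exact part_i_subset hbt hdK (A : Set (K × K)) (B : Set (K × K))
        hAm hAt hAs hBm hBt hBs B.2 hBbot hBtop htr hne
    · exact part_i_subset hbt hdK (B : Set (K × K)) (A : Set (K × K))
        hBm hBt hBs hAm hAt hAs A.2 hAbot hAtop htr.symm (htr ▸ hne)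
  · -- part (ii)
    ext A
    simp only [Set.mem_setOf_eq]
    constructor
    · rintro ⟨hAC, htr0⟩
      obtain ⟨hAm, hAt, hAs, hAbot, hAtop⟩ := hprops A hAC
      rw [hYYs] at htr0
      set k₀ : K := e (Classical.arbitrary X) with hk₀def
      have hk₁ : ⊥ < k₀ := bot_lt_img e hmin _
      have hk₂ : k₀ < ⊤ := img_lt_top e hmax _
      obtain ⟨y, hy⟩ := hAt k₀
      rcases eq_or_lt_of_le (bot_le : (⊥ : K) ≤ y) with h1 | h1
      · exact Or.inl (branch_bot hbt hdK (A : Set (K × K)) A.2 hAm hAt hAs htr0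
          hk₁ hk₂ (h1 ▸ hy))
      rcases eq_or_lt_of_le (le_top : y ≤ ⊤) with h2 | h2
      · exact Or.inr (branch_top hbt hdK (A : Set (K × K)) A.2 hAm hAt hAs htr0
          hk₁ hk₂ (h2 ▸ hy))
      · exfalso
        have : ((k₀, y) : K × K) ∈ (A : Set (K × K)) ∩ YYs K :=
          ⟨hy, ne_of_gt hk₁, ne_of_lt hk₂, ne_of_gt h1, ne_of_lt h2⟩
        rw [htr0] at this
        exact this
    · intro h
      have htr0 : (A : Set (K × K)) ∩ YY = ∅ := by
        rcases h with h | h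
        · rw [h, hYY, Set.eq_empty_iff_forall_notMem]
          rintro ⟨z₁, z₂⟩ ⟨hz, ha, hb, hc, hd'⟩
          rcases hz with h' | h'
          · exact hc h'
          · exact hb h'
        · rw [h, hYY, Set.eq_empty_iff_forall_notMem]
          rintro ⟨z₁, z₂⟩ ⟨hz, ha, hb, hc, hd'⟩
          rcases hz with h' | h'
          · exact ha h'
          · exact hd' h'
      refine ⟨?_, htr0⟩
      rcases h with h | h
      · have hAeq : A = (⟨{p : K × K | p.2 = ⊥ ∨ p.1 = ⊤}, E1_closed⟩ : HClosed (K × K)) :=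
          Subtype.ext h
        rw [hAeq, hC]
        exact E1_mem_C e hdense hatf hhat hX hd hmin hmax
      · have hAeq : A = (⟨{p : K × K | p.1 = ⊥ ∨ p.2 = ⊤}, E2_closed⟩ : HClosed (K × K)) :=
          Subtype.ext h
        rw [hAeq, hC]
        exact E2_mem_C e hdense hatf hhat hX hd hmin hmax
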